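/- Assume: (i) for every g ∈ G and all nonzero v, w ∈ V with Submodule.span (ZMod p) {v} = Submodule.span (ZMod p) {w}, one has Submodule.span (ZMod p) {g v} = Submodule.span (ZMod p) {g w}; and (ii) for every g ∈ G and all nonzero u, v, w ∈ V: u ∈ Submodule.span (ZMod p) {v, w} if and only if g u ∈ Submodule.span (ZMod p) {g v, g w}. Then G = G* Aut(V), where G* consists of the elements of G fixing every one-dimensional subspace setwise: for every g ∈ G there exist h ∈ G and a linear automorphism φ : V ≃ₗ[ZMod p] V such that Submodule.span (ZMod p) {h v} = Submodule.span (ZMod p) {v} for all v ∈ V and g x = h (φ x) for all x ∈ V. -/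

import Mathlib

open Submodule

section Aux

variable {K : Type*} [Field K] {V : Type*} [AddCommGroup V] [Module K V]

/-- coefficient extraction for a pair of independent vectors -/
theorem pair_indep {f : ℕ → V} (hf : LinearIndependent K f) {i j : ℕ} (hij : i ≠ j)
    {a c : K} (h : a • f i + c • f j = 0) : a = 0 ∧ c = 0 := by
  have hinj : Function.Injective (![i, j]) := by
    intro x y hxy
    fin_cases x <;> fin_cases y <;> simp_all
  have h2 := hf.comp ![i, j] hinj
  rw [Fintype.linearIndependent_iff] at h2
  have := h2 ![a, c] (by simpa [Fin.sum_univ_two] using h)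
  exact ⟨by simpa using this 0, by simpa using this 1⟩

/-- coefficient extraction for a triple of independent vectors -/
theorem triple_indep {f : ℕ → V} (hf : LinearIndependent K f) {i j k : ℕ}
    (hij : i ≠ j) (hik : i ≠ k) (hjk : j ≠ k)
    {a c d : K} (h : a • f i + c • f j + d • f k = 0) : a = 0 ∧ c = 0 ∧ d = 0 := by
  have hinj : Function.Injective (![i, j, k]) := by
    intro x y hxy
    fin_cases x <;> fin_cases y <;> simp_all
  have h2 := hf.comp ![i, j, k] hinj
  rw [Fintype.linearIndependent_iff] at h2
  have := h2 ![a, c, d] (by simpa [Fin.sum_univ_three, add_assoc] using h)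
  exact ⟨by simpa using this 0, by simpa using this 1, by simpa using this 2⟩

theorem span_triple_indep {f : ℕ → V} (hf : LinearIndependent K f) {T : Set ℕ} {w : V}
    (hw : w ∈ Submodule.span K (f '' T)) (hw0 : w ≠ 0) {j k : ℕ}
    (hj : j ∉ T) (hk : k ∉ T) (hjk : j ≠ k)
    {a c d : K} (h : a • w + c • f j + d • f k = 0) : a = 0 ∧ c = 0 ∧ d = 0 := by
  have hdisj : Disjoint (Submodule.span K (f '' T)) (Submodule.span K (f '' {j, k})) :=
    hf.disjoint_span_image (Set.disjoint_left.2 fun x hx hx' => by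
      rcases hx' with rfl | rfl
      exacts [hj hx, hk hx])
  have hmem1 : a • w ∈ Submodule.span K (f '' T) := Submodule.smul_mem _ _ hw
  have hmem2 : a • w ∈ Submodule.span K (f '' {j, k}) := by
    have he : a • w = -(c • f j + d • f k) := by
      linear_combination (norm := module) h
    rw [he, Set.image_pair]
    exact neg_mem (add_mem
      (Submodule.smul_mem _ _ (Submodule.subset_span (Set.mem_insert _ _)))
      (Submodule.smul_mem _ _ (Submodule.subset_span (Set.mem_insert_of_mem _ rfl))))
  have haw : a • w = 0 := (Submodule.disjoint_def.1 hdisj) _ hmem1 hmem2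
  have ha : a = 0 := by
    rcases smul_eq_zero.1 haw with h' | h'
    · exact h'
    · exact absurd h' hw0
  subst ha
  rw [zero_smul, zero_add] at h
  obtain ⟨hc, hd⟩ := pair_indep hf hjk h
  exact ⟨rfl, hc, hd⟩

end Aux

section Main

variable {p : ℕ} [Fact p.Prime] {V : Type*} [AddCommGroup V] [Module (ZMod p) V]
variable {g : Equiv.Perm V}

theorem gne (hg0 : g 0 = 0) {x : V} (hx : x ≠ 0) : g x ≠ 0 := by
  intro h
  exact hx (g.injective (by rw [h, hg0]))

variable (hg0 : g 0 = 0)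
  (hB : ∀ u v w : V, u ≠ 0 → v ≠ 0 → w ≠ 0 →
    (u ∈ span (ZMod p) ({v, w} : Set V) ↔ g u ∈ span (ZMod p) ({g v, g w} : Set V)))

include hg0 hB in
theorem single_mem {x w : V} (hx : x ≠ 0) (hw : w ≠ 0) :
    x ∈ span (ZMod p) ({w} : Set V) ↔ g x ∈ span (ZMod p) ({g w} : Set V) := by
  have := hB x w w hx hw hw
  simpa using this

variable (b : Module.Basis ℕ (ZMod p) V)

set_option linter.unusedSectionVars false

include hg0 hB in
theorem claimC : ∀ (S : Finset ℕ) (x : V), x ≠ 0 →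
    (x ∈ span (ZMod p) (b '' (S : Set ℕ)) ↔
      g x ∈ span (ZMod p) ((fun i => g (b i)) '' (S : Set ℕ))) := by
  intro S
  induction S using Finset.induction_on with
  | empty => intro x hx; simp [hx, gne hg0 hx]
  | @insert m S hm IH =>
    intro x hx
    rw [Finset.coe_insert, Set.image_insert_eq, Set.image_insert_eq]
    constructor
    · intro hmem
      rw [mem_span_insert] at hmem
      obtain ⟨a, z, hz, hxe⟩ := hmem
      by_cases hz0 : z = 0
      · subst hz0
        have ha : a ≠ 0 := by rintro rfl; simp at hxe; exact hx hxe
        have : x ∈ span (ZMod p) ({b m} : Set V) :=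
          mem_span_singleton.2 ⟨a, by rw [hxe]; simp⟩
        have := (single_mem hg0 hB hx (b.ne_zero m)).1 this
        exact span_mono (by simp) this
      · by_cases ha0 : a = 0
        · subst ha0
          simp only [zero_smul, zero_add] at hxe
          rw [hxe]
          exact span_mono (Set.subset_insert _ _) ((IH z hz0).1 hz)
        · have hxp : x ∈ span (ZMod p) ({z, b m} : Set V) :=
            mem_span_pair.2 ⟨1, a, by rw [hxe]; module⟩
          have := (hB x z (b m) hx hz0 (b.ne_zero m)).1 hxp
          have hgz : g z ∈ span (ZMod p)
              (insert (g (b m)) ((fun i => g (b i)) '' (S : Set ℕ))) :=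
            span_mono (Set.subset_insert _ _) ((IH z hz0).1 hz)
          obtain ⟨c, d, hcd⟩ := mem_span_pair.1 this
          rw [← hcd]
          exact add_mem (smul_mem _ _ hgz)
            (smul_mem _ _ (subset_span (Set.mem_insert _ _)))
    · intro hmem
      rw [mem_span_insert] at hmem
      obtain ⟨a, z, hz, hxe⟩ := hmem
      by_cases hz0 : z = 0
      · subst hz0
        have hgx : g x ≠ 0 := gne hg0 hx
        have ha : a ≠ 0 := by rintro rfl; simp at hxe; exact hgx hxe
        have : g x ∈ span (ZMod p) ({g (b m)} : Set V) :=
          mem_span_singleton.2 ⟨a, by rw [hxe]; simp⟩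
        have := (single_mem hg0 hB hx (b.ne_zero m)).2 this
        exact span_mono (by simp) this
      · set y := g.symm z with hy
        have hgy : g y = z := g.apply_symm_apply z
        have hy0 : y ≠ 0 := by
          intro h; rw [h, hg0] at hgy; exact hz0 hgy.symm
        have hzS : y ∈ span (ZMod p) (b '' (S : Set ℕ)) :=
          (IH y hy0).2 (by rw [hgy]; exact hz)
        by_cases ha0 : a = 0
        · subst ha0
          simp only [zero_smul, zero_add] at hxe
          have : g x ∈ span (ZMod p) ((fun i => g (b i)) '' (S : Set ℕ)) := by
            rw [hxe]; exact hz
          exact span_mono (Set.subset_insert _ _) ((IH x hx).2 this)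
        · have hxp : g x ∈ span (ZMod p) ({g y, g (b m)} : Set V) :=
            mem_span_pair.2 ⟨1, a, by rw [hxe, hgy]; module⟩
          have := (hB x y (b m) hx hy0 (b.ne_zero m)).2 hxp
          obtain ⟨c, d, hcd⟩ := mem_span_pair.1 this
          rw [← hcd]
          exact add_mem (smul_mem _ _ (span_mono (Set.subset_insert _ _) hzS))
            (smul_mem _ _ (subset_span (Set.mem_insert _ _)))

include hg0 hB in
theorem gb_indep : LinearIndependent (ZMod p) (fun i => g (b i)) := by
  rw [linearIndependent_iff']
  intro s f hsum i hi
  by_contra hfi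
  have key : g (b i) ∈ span (ZMod p) ((fun j => g (b j)) '' ((s.erase i : Finset ℕ) : Set ℕ)) := by
    have hsplit : ∑ j ∈ s.erase i, f j • g (b j) + f i • g (b i) = 0 := by
      rw [Finset.sum_erase_add s _ hi]; exact hsum
    have heq : g (b i) = ∑ j ∈ s.erase i, (-(f i)⁻¹ * f j) • g (b j) := by
      have h2 : f i • g (b i) = -∑ j ∈ s.erase i, f j • g (b j) :=
        eq_neg_of_add_eq_zero_right (by linear_combination (norm := module) hsplit)
      have h3 : (f i)⁻¹ • (f i • g (b i)) = (f i)⁻¹ • -∑ j ∈ s.erase i, f j • g (b j) := by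
        rw [h2]
      rw [smul_smul, inv_mul_cancel₀ hfi, one_smul] at h3
      rw [h3, ← Finset.sum_neg_distrib, Finset.smul_sum]
      exact Finset.sum_congr rfl fun j _ => by
        rw [smul_neg, smul_smul, ← neg_smul]; ring_nf
    rw [heq]
    exact sum_mem fun j hj =>
      smul_mem _ _ (subset_span (Set.mem_image_of_mem _ (by exact_mod_cast hj)))
  have := (claimC hg0 hB b (s.erase i) (b i) (b.ne_zero i)).2 key
  exact b.linearIndependent.notMem_span_image (by simp) this

include hg0 hB in
theorem exists_norm (j : ℕ) (hj : j ≠ 0) :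
    ∃ c : ZMod p, c ≠ 0 ∧ ∃ A : ZMod p, A ≠ 0 ∧
      g (b 0 + b j) = A • (g (b 0) + c • g (b j)) := by
  have h0j : (0 : ℕ) ≠ j := fun h => hj h.symm
  have hx : b 0 + b j ≠ 0 := by
    intro h
    have := pair_indep b.linearIndependent h0j
      (a := 1) (c := 1) (by rw [one_smul, one_smul]; exact h)
    exact one_ne_zero this.1
  have hmem : b 0 + b j ∈ span (ZMod p) ({b 0, b j} : Set V) :=
    mem_span_pair.2 ⟨1, 1, by module⟩
  have := (hB _ _ _ hx (b.ne_zero 0) (b.ne_zero j)).1 hmem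
  obtain ⟨A, B, hAB⟩ := mem_span_pair.1 this
  have hA : A ≠ 0 := by
    rintro rfl
    rw [zero_smul, zero_add] at hAB
    have : b 0 + b j ∈ span (ZMod p) ({b j} : Set V) :=
      (single_mem hg0 hB hx (b.ne_zero j)).2 (mem_span_singleton.2 ⟨B, hAB⟩)
    obtain ⟨t, ht⟩ := mem_span_singleton.1 this
    have := pair_indep b.linearIndependent h0j
      (a := 1) (c := 1 - t) (by linear_combination (norm := module) -ht)
    exact one_ne_zero this.1
  have hBne : B ≠ 0 := by
    rintro rfl
    rw [zero_smul, add_zero] at hAB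
    have : b 0 + b j ∈ span (ZMod p) ({b 0} : Set V) :=
      (single_mem hg0 hB hx (b.ne_zero 0)).2 (mem_span_singleton.2 ⟨A, hAB⟩)
    obtain ⟨t, ht⟩ := mem_span_singleton.1 this
    have := pair_indep b.linearIndependent h0j
      (a := 1 - t) (c := 1) (by linear_combination (norm := module) -ht)
    exact one_ne_zero this.2
  refine ⟨B / A, div_ne_zero hBne hA, A, hA, ?_⟩
  rw [smul_add, smul_smul, ← hAB]
  congr 1
  rw [mul_div_cancel₀ _ hA]

variable [DecidableEq ℕ] in
/-- the normalized images of the basis vectors -/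
noncomputable def fvec
    (hg0 : g 0 = 0)
    (hB : ∀ u v w : V, u ≠ 0 → v ≠ 0 → w ≠ 0 →
      (u ∈ span (ZMod p) ({v, w} : Set V) ↔ g u ∈ span (ZMod p) ({g v, g w} : Set V)))
    (b : Module.Basis ℕ (ZMod p) V) (j : ℕ) : V :=
  if h : j = 0 then g (b 0)
  else Classical.choose (exists_norm hg0 hB b j h) • g (b j)

theorem fvec_zero [DecidableEq ℕ] : fvec hg0 hB b 0 = g (b 0) := by simp [fvec]

theorem fvec_parallel [DecidableEq ℕ] (j : ℕ) :
    ∃ c : ZMod p, c ≠ 0 ∧ fvec hg0 hB b j = c • g (b j) := by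
  by_cases h : j = 0
  · subst h; exact ⟨1, one_ne_zero, by simp [fvec]⟩
  · obtain ⟨hc, -⟩ := Classical.choose_spec (exists_norm hg0 hB b j h)
    exact ⟨_, hc, by simp [fvec, h]⟩

theorem fvec_ne_zero [DecidableEq ℕ] (j : ℕ) : fvec hg0 hB b j ≠ 0 := by
  obtain ⟨c, hc, hce⟩ := fvec_parallel hg0 hB b j
  rw [hce]
  exact smul_ne_zero hc (gne hg0 (b.ne_zero j))

theorem fvec_norm [DecidableEq ℕ] (j : ℕ) (hj : j ≠ 0) :
    ∃ A : ZMod p, A ≠ 0 ∧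
      g (b 0 + b j) = A • (fvec hg0 hB b 0 + fvec hg0 hB b j) := by
  obtain ⟨hc, A, hA, hAe⟩ := Classical.choose_spec (exists_norm hg0 hB b j hj)
  exact ⟨A, hA, by rw [fvec_zero]; simp only [fvec, dif_neg hj]; exact hAe⟩

theorem fvec_indep [DecidableEq ℕ] : LinearIndependent (ZMod p) (fvec hg0 hB b) := by
  choose c hc0 hce using fvec_parallel hg0 hB b
  have : fvec hg0 hB b = (fun i => Units.mk0 (c i) (hc0 i)) • (fun i => g (b i)) := by
    funext i
    simpa [Units.smul_def] using hce i
  rw [this]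
  exact (gb_indep hg0 hB b).units_smul _

variable [DecidableEq ℕ] in
/-- the candidate linear map -/
noncomputable def psi
    (hg0 : g 0 = 0)
    (hB : ∀ u v w : V, u ≠ 0 → v ≠ 0 → w ≠ 0 →
      (u ∈ span (ZMod p) ({v, w} : Set V) ↔ g u ∈ span (ZMod p) ({g v, g w} : Set V)))
    (b : Module.Basis ℕ (ZMod p) V) : V →ₗ[ZMod p] V :=
  (Finsupp.linearCombination (ZMod p) (fvec hg0 hB b)) ∘ₗ
    (b.repr : V ≃ₗ[ZMod p] (ℕ →₀ ZMod p)).toLinearMap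

theorem psi_basis [DecidableEq ℕ] (i : ℕ) : psi hg0 hB b (b i) = fvec hg0 hB b i := by
  simp [psi]

theorem psi_injective [DecidableEq ℕ] : Function.Injective (psi hg0 hB b) := by
  have h1 : Function.Injective (Finsupp.linearCombination (ZMod p) (fvec hg0 hB b)) :=
    fvec_indep hg0 hB b
  exact h1.comp b.repr.injective

theorem psi_mem_span_support [DecidableEq ℕ] (x : V) :
    psi hg0 hB b x ∈ span (ZMod p) (fvec hg0 hB b '' ((b.repr x).support : Set ℕ)) := by
  rw [psi]
  simp only [LinearMap.coe_comp, Function.comp_apply, LinearEquiv.coe_coe,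
    Finsupp.linearCombination_apply, Finsupp.sum]
  exact sum_mem fun i hi =>
    smul_mem _ _ (subset_span (Set.mem_image_of_mem _ (by exact_mod_cast hi)))

theorem comb2_ne {i j : ℕ} (hij : i ≠ j) {a c : ZMod p} (ha : a ≠ 0) :
    a • b i + c • b j ≠ 0 := fun h => ha (pair_indep b.linearIndependent hij h).1

theorem comb3_ne {i j k : ℕ} (hij : i ≠ j) (hik : i ≠ k) (hjk : j ≠ k)
    {a c d : ZMod p} (ha : a ≠ 0) : a • b i + c • b j + d • b k ≠ 0 :=
  fun h => ha (triple_indep b.linearIndependent hij hik hjk h).1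

include hg0 hB in
theorem gspan {x u v u' v' : V} (hx : x ≠ 0) (hu : u ≠ 0) (hv : v ≠ 0)
    (hmem : x ∈ span (ZMod p) ({u, v} : Set V))
    {α β : ZMod p} (hu' : g u = α • u') (hv' : g v = β • v') :
    ∃ A B : ZMod p, g x = A • u' + B • v' := by
  obtain ⟨C, D, hCD⟩ := mem_span_pair.1 ((hB x u v hx hu hv).1 hmem)
  exact ⟨C * α, D * β, by rw [← hCD, hu', hv']; module⟩

theorem gb_fvec [DecidableEq ℕ] (j : ℕ) :
    ∃ α : ZMod p, α ≠ 0 ∧ g (b j) = α • fvec hg0 hB b j := by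
  obtain ⟨c, hc, hce⟩ := fvec_parallel hg0 hB b j
  exact ⟨c⁻¹, inv_ne_zero hc, by rw [hce, smul_smul, inv_mul_cancel₀ hc, one_smul]⟩

include hg0 hB in
theorem exists_tau [DecidableEq ℕ] (j : ℕ) (hj : j ≠ 0) (c : ZMod p) (hc : c ≠ 0) :
    ∃ t : ZMod p, t ≠ 0 ∧ ∃ A : ZMod p, A ≠ 0 ∧
      g (b 0 + c • b j) = A • (fvec hg0 hB b 0 + t • fvec hg0 hB b j) := by
  have h0j : (0 : ℕ) ≠ j := fun h => hj h.symm
  have hx : b 0 + c • b j ≠ 0 := by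
    intro h
    exact one_ne_zero (pair_indep b.linearIndependent h0j
      (a := 1) (c := c) (by rw [one_smul]; exact h)).1
  have hmem : b 0 + c • b j ∈ span (ZMod p) ({b 0, b j} : Set V) :=
    mem_span_pair.2 ⟨1, c, by module⟩
  obtain ⟨γ, hγ, hγe⟩ := gb_fvec hg0 hB b j
  have h00 : g (b 0) = (1 : ZMod p) • fvec hg0 hB b 0 := by
    rw [fvec_zero, one_smul]
  obtain ⟨A, B, hABe⟩ := gspan hg0 hB hx (b.ne_zero 0) (b.ne_zero j) hmem h00 hγe
  obtain ⟨cj, hcj, hcje⟩ := fvec_parallel hg0 hB b j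
  have hA : A ≠ 0 := by
    rintro rfl
    rw [zero_smul, zero_add] at hABe
    have hgmem : g (b 0 + c • b j) ∈ span (ZMod p) ({g (b j)} : Set V) :=
      mem_span_singleton.2 ⟨B * cj, by rw [hABe, hcje]; module⟩
    obtain ⟨t, ht⟩ := mem_span_singleton.1
      ((single_mem hg0 hB hx (b.ne_zero j)).2 hgmem)
    exact one_ne_zero (pair_indep b.linearIndependent h0j
      (a := 1) (c := c - t) (by linear_combination (norm := module) -ht)).1
  have hBne : B ≠ 0 := by
    rintro rfl
    rw [zero_smul, add_zero, fvec_zero] at hABe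
    have hgmem : g (b 0 + c • b j) ∈ span (ZMod p) ({g (b 0)} : Set V) :=
      mem_span_singleton.2 ⟨A, hABe.symm⟩
    obtain ⟨t, ht⟩ := mem_span_singleton.1
      ((single_mem hg0 hB hx (b.ne_zero 0)).2 hgmem)
    exact hc (pair_indep b.linearIndependent h0j
      (a := 1 - t) (c := c) (by linear_combination (norm := module) -ht)).2
  refine ⟨B / A, div_ne_zero hBne hA, A, hA, ?_⟩
  rw [hABe, smul_add, smul_smul, mul_div_cancel₀ _ hA]

variable [DecidableEq ℕ] in
/-- the induced map on scalars -/
noncomputable def tau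
    (hg0 : g 0 = 0)
    (hB : ∀ u v w : V, u ≠ 0 → v ≠ 0 → w ≠ 0 →
      (u ∈ span (ZMod p) ({v, w} : Set V) ↔ g u ∈ span (ZMod p) ({g v, g w} : Set V)))
    (b : Module.Basis ℕ (ZMod p) V) (j : ℕ) (c : ZMod p) : ZMod p :=
  if h : j ≠ 0 ∧ c ≠ 0 then Classical.choose (exists_tau hg0 hB b j h.1 c h.2) else 0

theorem tau_spec [DecidableEq ℕ] {j : ℕ} (hj : j ≠ 0) {c : ZMod p} (hc : c ≠ 0) :
    tau hg0 hB b j c ≠ 0 ∧ ∃ A : ZMod p, A ≠ 0 ∧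
      g (b 0 + c • b j) =
        A • (fvec hg0 hB b 0 + tau hg0 hB b j c • fvec hg0 hB b j) := by
  have h : j ≠ 0 ∧ c ≠ 0 := ⟨hj, hc⟩
  rw [tau, dif_pos h]
  exact Classical.choose_spec (exists_tau hg0 hB b j h.1 c h.2)

theorem tau_unique [DecidableEq ℕ] {j : ℕ} (hj : j ≠ 0) {c : ZMod p} (hc : c ≠ 0)
    {t A : ZMod p} (hA : A ≠ 0)
    (he : g (b 0 + c • b j) =
      A • (fvec hg0 hB b 0 + t • fvec hg0 hB b j)) :
    t = tau hg0 hB b j c := by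
  obtain ⟨-, A', hA', he'⟩ := tau_spec hg0 hB b hj hc
  have h0j : (0 : ℕ) ≠ j := fun h => hj h.symm
  have hz : (A - A') • fvec hg0 hB b 0 +
      (A * t - A' * tau hg0 hB b j c) • fvec hg0 hB b j = 0 := by
    linear_combination (norm := module) he' - he
  obtain ⟨h1, h2⟩ := pair_indep (fvec_indep hg0 hB b) h0j hz
  have hAA : A = A' := by linear_combination h1
  subst hAA
  have h3 : A * t = A * tau hg0 hB b j c := by linear_combination h2
  exact mul_left_cancel₀ hA h3

theorem tau_one [DecidableEq ℕ] {j : ℕ} (hj : j ≠ 0) : tau hg0 hB b j 1 = 1 := by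
  obtain ⟨A, hA, he⟩ := fvec_norm hg0 hB b j hj
  exact (tau_unique hg0 hB b hj one_ne_zero hA (by simpa using he)).symm

include hg0 hB in
theorem dagger [DecidableEq ℕ] {j k : ℕ} (hj : j ≠ 0) (hk : k ≠ 0) (hjk : j ≠ k)
    {c d : ZMod p} (hc : c ≠ 0) (hd : d ≠ 0) :
    ∃ A : ZMod p, A ≠ 0 ∧ g (b 0 + c • b j + d • b k) =
      A • (fvec hg0 hB b 0 + tau hg0 hB b j c • fvec hg0 hB b j
        + tau hg0 hB b k d • fvec hg0 hB b k) := by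
  have h0j : (0:ℕ) ≠ j := fun h => hj h.symm
  have h0k : (0:ℕ) ≠ k := fun h => hk h.symm
  obtain ⟨-, A1, hA1, he1⟩ := tau_spec hg0 hB b hj hc
  obtain ⟨-, A2, hA2, he2⟩ := tau_spec hg0 hB b hk hd
  obtain ⟨γk, hγk, hγke⟩ := gb_fvec hg0 hB b k
  obtain ⟨γj, hγj, hγje⟩ := gb_fvec hg0 hB b j
  have hx : b 0 + c • b j + d • b k ≠ 0 := fun h =>
    one_ne_zero (triple_indep b.linearIndependent h0j h0k hjk (a := 1)
      (by rw [one_smul]; exact h)).1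
  have hu1 : b 0 + c • b j ≠ 0 := fun h =>
    one_ne_zero (pair_indep b.linearIndependent h0j (a := 1)
      (by rw [one_smul]; exact h)).1
  have hu2 : b 0 + d • b k ≠ 0 := fun h =>
    one_ne_zero (pair_indep b.linearIndependent h0k (a := 1)
      (by rw [one_smul]; exact h)).1
  have hm1 : b 0 + c • b j + d • b k ∈
      span (ZMod p) ({b 0 + c • b j, b k} : Set V) :=
    mem_span_pair.2 ⟨1, d, by module⟩
  have hm2 : b 0 + c • b j + d • b k ∈
      span (ZMod p) ({b 0 + d • b k, b j} : Set V) :=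
    mem_span_pair.2 ⟨1, c, by module⟩
  obtain ⟨A, B, e1⟩ := gspan hg0 hB hx hu1 (b.ne_zero k) hm1 he1 hγke
  obtain ⟨A', B', e2⟩ := gspan hg0 hB hx hu2 (b.ne_zero j) hm2 he2 hγje
  have e3 : (A - A') • fvec hg0 hB b 0 +
      (A * tau hg0 hB b j c - B') • fvec hg0 hB b j +
      (B - A' * tau hg0 hB b k d) • fvec hg0 hB b k = 0 := by
    linear_combination (norm := module) e2 - e1
  obtain ⟨q1, q2, q3⟩ := triple_indep (fvec_indep hg0 hB b) h0j h0k hjk e3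
  have hAA' : A = A' := by linear_combination q1
  have hA0 : A ≠ 0 := by
    rintro rfl
    have hBv : B = 0 := by rw [← hAA'] at q3; simpa using q3
    refine gne hg0 hx ?_
    rw [e1, hBv]
    simp
  refine ⟨A, hA0, ?_⟩
  have hBv : B = A * tau hg0 hB b k d := by
    rw [← hAA'] at q3; linear_combination q3
  rw [e1, hBv]
  module

include hg0 hB in
theorem ddagger [DecidableEq ℕ] {j k : ℕ} (hj : j ≠ 0) (hk : k ≠ 0) (hjk : j ≠ k)
    {c d : ZMod p} (hc : c ≠ 0) (hd : d ≠ 0) :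
    ∃ A : ZMod p, A ≠ 0 ∧ g (c • b j + d • b k) =
      A • (tau hg0 hB b j c • fvec hg0 hB b j
        + tau hg0 hB b k d • fvec hg0 hB b k) := by
  have h0j : (0:ℕ) ≠ j := fun h => hj h.symm
  have h0k : (0:ℕ) ≠ k := fun h => hk h.symm
  obtain ⟨A1, hA1, he1⟩ := dagger hg0 hB b hj hk hjk hc hd
  obtain ⟨γk, hγk, hγke⟩ := gb_fvec hg0 hB b k
  obtain ⟨γj, hγj, hγje⟩ := gb_fvec hg0 hB b j
  have h00 : g (b 0) = (1 : ZMod p) • fvec hg0 hB b 0 := by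
    rw [fvec_zero, one_smul]
  have hx : c • b j + d • b k ≠ 0 := fun h =>
    hc (pair_indep b.linearIndependent hjk h).1
  have hu1 : b 0 + c • b j + d • b k ≠ 0 := fun h =>
    one_ne_zero (triple_indep b.linearIndependent h0j h0k hjk (a := 1)
      (by rw [one_smul]; exact h)).1
  have hm1 : c • b j + d • b k ∈
      span (ZMod p) ({b 0 + c • b j + d • b k, b 0} : Set V) :=
    mem_span_pair.2 ⟨1, -1, by module⟩
  have hm2 : c • b j + d • b k ∈ span (ZMod p) ({b j, b k} : Set V) :=
    mem_span_pair.2 ⟨c, d, rfl⟩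
  obtain ⟨A, B, e1⟩ := gspan hg0 hB hx hu1 (b.ne_zero 0) hm1 he1 h00
  obtain ⟨A2, B2, e2⟩ := gspan hg0 hB hx (b.ne_zero j) (b.ne_zero k) hm2 hγje hγke
  have e3 : (A + B) • fvec hg0 hB b 0 +
      (A * tau hg0 hB b j c - A2) • fvec hg0 hB b j +
      (A * tau hg0 hB b k d - B2) • fvec hg0 hB b k = 0 := by
    linear_combination (norm := module) e2 - e1
  obtain ⟨q1, q2, q3⟩ := triple_indep (fvec_indep hg0 hB b) h0j h0k hjk e3
  have hA2v : A2 = A * tau hg0 hB b j c := by linear_combination -q2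
  have hB2v : B2 = A * tau hg0 hB b k d := by linear_combination -q3
  have hA0 : A ≠ 0 := by
    rintro rfl
    refine gne hg0 hx ?_
    rw [e2, hA2v, hB2v]
    simp
  refine ⟨A, hA0, ?_⟩
  rw [e2, hA2v, hB2v]
  module

include hg0 hB in
theorem tau_odd [DecidableEq ℕ] {k : ℕ} (hk : k ≠ 0) {d : ZMod p} (hd : d ≠ 0) :
    tau hg0 hB b k (-d) = -tau hg0 hB b k d := by
  set j := k + 1 with hjdef
  have hj : j ≠ 0 := Nat.succ_ne_zero k
  have hjk : j ≠ k := Nat.succ_ne_self k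
  have h0j : (0:ℕ) ≠ j := fun h => hj h.symm
  have h0k : (0:ℕ) ≠ k := fun h => hk h.symm
  obtain ⟨-, A1, hA1, he1⟩ := tau_spec hg0 hB b hk hd
  obtain ⟨A2, hA2, he2⟩ := ddagger hg0 hB b hj hk hjk one_ne_zero (neg_ne_zero.2 hd)
  rw [tau_one hg0 hB b hj] at he2
  obtain ⟨A3, hA3, he3⟩ := fvec_norm hg0 hB b j hj
  have hx : b 0 + b j ≠ 0 := fun h =>
    one_ne_zero (pair_indep b.linearIndependent h0j (a := 1) (c := 1)
      (by rw [one_smul, one_smul]; exact h)).1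
  have hu : b 0 + d • b k ≠ 0 := fun h =>
    one_ne_zero (pair_indep b.linearIndependent h0k (a := 1)
      (by rw [one_smul]; exact h)).1
  have hv : (1 : ZMod p) • b j + (-d) • b k ≠ 0 := fun h =>
    one_ne_zero (pair_indep b.linearIndependent hjk h).1
  have hm : b 0 + b j ∈
      span (ZMod p) ({b 0 + d • b k, (1 : ZMod p) • b j + (-d) • b k} : Set V) :=
    mem_span_pair.2 ⟨1, 1, by module⟩
  obtain ⟨A, B, e1⟩ := gspan hg0 hB hx hu hv hm he1 he2
  have e4 : (A - A3) • fvec hg0 hB b 0 + (B - A3) • fvec hg0 hB b j +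
      (A * tau hg0 hB b k d + B * tau hg0 hB b k (-d)) • fvec hg0 hB b k = 0 := by
    linear_combination (norm := module) he3 - e1
  obtain ⟨q1, q2, q3⟩ := triple_indep (fvec_indep hg0 hB b) h0j h0k hjk e4
  have h5 : A3 * (tau hg0 hB b k d + tau hg0 hB b k (-d)) = 0 := by
    linear_combination q3 - tau hg0 hB b k d * q1 - tau hg0 hB b k (-d) * q2
  have h6 : tau hg0 hB b k d + tau hg0 hB b k (-d) = 0 :=
    (mul_eq_zero.1 h5).resolve_left hA3
  exact eq_neg_of_add_eq_zero_right h6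

include hg0 hB in
theorem tau_step [DecidableEq ℕ] {j : ℕ} (hj : j ≠ 0) {c : ZMod p} (hc : c ≠ 0)
    (hc1 : c + 1 ≠ 0) : tau hg0 hB b j (c + 1) = tau hg0 hB b j c + 1 := by
  set k := j + 1 with hkdef
  have hk : k ≠ 0 := Nat.succ_ne_zero j
  have hjk : j ≠ k := (Nat.succ_ne_self j).symm
  have h0j : (0:ℕ) ≠ j := fun h => hj h.symm
  have h0k : (0:ℕ) ≠ k := fun h => hk h.symm
  obtain ⟨A1, hA1, he1⟩ := dagger hg0 hB b hj hk hjk hc one_ne_zero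
  rw [tau_one hg0 hB b hk] at he1
  obtain ⟨A2, hA2, he2⟩ := ddagger hg0 hB b hj hk hjk one_ne_zero
    (neg_ne_zero.2 (one_ne_zero : (1 : ZMod p) ≠ 0))
  rw [tau_one hg0 hB b hj, tau_odd hg0 hB b hk one_ne_zero,
    tau_one hg0 hB b hk] at he2
  obtain ⟨-, A3, hA3, he3⟩ := tau_spec hg0 hB b hj hc1
  have hx : b 0 + (c + 1) • b j ≠ 0 := fun h =>
    one_ne_zero (pair_indep b.linearIndependent h0j (a := 1)
      (by rw [one_smul]; exact h)).1
  have hu : b 0 + c • b j + (1 : ZMod p) • b k ≠ 0 := fun h =>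
    one_ne_zero (triple_indep b.linearIndependent h0j h0k hjk (a := 1)
      (by rw [one_smul]; exact h)).1
  have hv : (1 : ZMod p) • b j + (-1 : ZMod p) • b k ≠ 0 := fun h =>
    one_ne_zero (pair_indep b.linearIndependent hjk h).1
  have hm : b 0 + (c + 1) • b j ∈
      span (ZMod p)
        ({b 0 + c • b j + (1 : ZMod p) • b k,
          (1 : ZMod p) • b j + (-1 : ZMod p) • b k} : Set V) :=
    mem_span_pair.2 ⟨1, 1, by module⟩
  obtain ⟨A, B, e1⟩ := gspan hg0 hB hx hu hv hm he1 he2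
  have e4 : (A - A3) • fvec hg0 hB b 0 +
      (A * tau hg0 hB b j c + B - A3 * tau hg0 hB b j (c + 1)) • fvec hg0 hB b j +
      (A - B) • fvec hg0 hB b k = 0 := by
    linear_combination (norm := module) he3 - e1
  obtain ⟨q1, q2, q3⟩ := triple_indep (fvec_indep hg0 hB b) h0j h0k hjk e4
  have h5 : A3 * tau hg0 hB b j (c + 1) = A3 * (tau hg0 hB b j c + 1) := by
    linear_combination tau hg0 hB b j c * q1 + q1 - q2 - q3
  exact mul_left_cancel₀ hA3 h5

include hg0 hB in
theorem tau_nat [DecidableEq ℕ] {j : ℕ} (hj : j ≠ 0) :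
    ∀ n : ℕ, 1 ≤ n → n < p → tau hg0 hB b j (n : ZMod p) = (n : ZMod p) := by
  intro n
  induction n with
  | zero => omega
  | succ n IH =>
    intro h1 hlt
    rcases Nat.eq_zero_or_pos n with hn | hn
    · subst hn
      simpa using tau_one hg0 hB b hj
    · have hn0 : (n : ZMod p) ≠ 0 := by
        rw [Ne, ZMod.natCast_eq_zero_iff]
        intro hdvd
        have := Nat.le_of_dvd (by omega) hdvd
        omega
      have hn1 : (n : ZMod p) + 1 ≠ 0 := by
        rw [show ((n : ZMod p) + 1) = ((n + 1 : ℕ) : ZMod p) by push_cast; ring,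
          Ne, ZMod.natCast_eq_zero_iff]
        intro hdvd
        have := Nat.le_of_dvd (by omega) hdvd
        omega
      rw [show ((n + 1 : ℕ) : ZMod p) = (n : ZMod p) + 1 by push_cast; ring,
        tau_step hg0 hB b hj hn0 hn1, IH (by omega) (by omega)]

include hg0 hB in
theorem tau_id [DecidableEq ℕ] {j : ℕ} (hj : j ≠ 0) {c : ZMod p} (hc : c ≠ 0) :
    tau hg0 hB b j c = c := by
  have hval : ((c.val : ℕ) : ZMod p) = c := ZMod.natCast_zmod_val c
  have h1 : 1 ≤ c.val := by
    rcases Nat.eq_zero_or_pos c.val with h | h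
    · exact absurd ((ZMod.val_eq_zero c).1 h) hc
    · exact h
  rw [← hval]
  exact tau_nat hg0 hB b hj c.val h1 (ZMod.val_lt c)

include hg0 hB in
theorem master1 [DecidableEq ℕ] {x : V} (hx : x ≠ 0)
    (hcard : (b.repr x).support.card = 1) :
    ∃ A : ZMod p, A ≠ 0 ∧ g x = A • psi hg0 hB b x := by
  obtain ⟨i, c, hc0, hrepr⟩ := Finsupp.card_support_eq_one'.1 hcard
  have hxe : x = c • b i := by
    have h1 := congrArg b.repr.symm hrepr
    rw [b.repr.symm_apply_apply, Module.Basis.repr_symm_single] at h1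
    exact h1
  obtain ⟨α, hα, hαe⟩ := gb_fvec hg0 hB b i
  have hmem : x ∈ span (ZMod p) ({b i} : Set V) := mem_span_singleton.2 ⟨c, hxe.symm⟩
  obtain ⟨t, ht⟩ := mem_span_singleton.1
    ((single_mem hg0 hB hx (b.ne_zero i)).1 hmem)
  have ht0 : t ≠ 0 := by
    rintro rfl
    rw [zero_smul] at ht
    exact gne hg0 hx ht.symm
  have hpx : psi hg0 hB b x = c • fvec hg0 hB b i := by
    rw [hxe, map_smul, psi_basis]
  refine ⟨t * α * c⁻¹, by simp [ht0, hα, hc0], ?_⟩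
  rw [← ht, hαe, hpx, smul_smul, smul_smul]
  congr 1
  field_simp

include hg0 hB in
theorem master2 [DecidableEq ℕ] {x : V} (hx : x ≠ 0)
    (hcard : (b.repr x).support.card = 2) :
    ∃ A : ZMod p, A ≠ 0 ∧ g x = A • psi hg0 hB b x := by
  obtain ⟨i, j, hij, hs⟩ := Finset.card_eq_two.1 hcard
  have hi : i ∈ (b.repr x).support := by rw [hs]; simp
  have hj : j ∈ (b.repr x).support := by rw [hs]; simp
  have hci : b.repr x i ≠ 0 := Finsupp.mem_support_iff.1 hi
  have hcj : b.repr x j ≠ 0 := Finsupp.mem_support_iff.1 hj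
  have hxe : x = b.repr x i • b i + b.repr x j • b j := by
    have h1 : b.repr x = Finsupp.single i (b.repr x i) + Finsupp.single j (b.repr x j) := by
      ext a
      rcases eq_or_ne a i with rfl | hai
      · simp [Finsupp.single_apply, hij, Ne.symm hij]
      · rcases eq_or_ne a j with rfl | haj
        · simp [Finsupp.single_apply, hij, Ne.symm hij, hai, Ne.symm hai]
        · have : a ∉ (b.repr x).support := by rw [hs]; simp [hai, haj]
          rw [Finsupp.notMem_support_iff.1 this]
          simp [Finsupp.single_apply, Ne.symm hai, Ne.symm haj]
    have h2 := congrArg b.repr.symm h1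
    rw [b.repr.symm_apply_apply, map_add, Module.Basis.repr_symm_single,
      Module.Basis.repr_symm_single] at h2
    exact h2
  have hpx : psi hg0 hB b x =
      b.repr x i • fvec hg0 hB b i + b.repr x j • fvec hg0 hB b j := by
    conv_lhs => rw [hxe]
    rw [map_add, map_smul, map_smul, psi_basis, psi_basis]
  -- helper for the `one of them is 0` case
  have key : ∀ (u v : ℕ) (cu cv : ZMod p), u = 0 → v ≠ 0 → cu ≠ 0 → cv ≠ 0 →
      x = cu • b u + cv • b v →
      psi hg0 hB b x = cu • fvec hg0 hB b u + cv • fvec hg0 hB b v →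
      ∃ A : ZMod p, A ≠ 0 ∧ g x = A • psi hg0 hB b x := by
    rintro u v cu cv rfl hv hcu hcv hxe' hpx'
    obtain ⟨-, A1, hA1, he1⟩ := tau_spec hg0 hB b hv (c := cv / cu)
      (div_ne_zero hcv hcu)
    rw [tau_id hg0 hB b hv (div_ne_zero hcv hcu)] at he1
    have hy0 : b 0 + (cv / cu) • b v ≠ 0 := fun h =>
      one_ne_zero (pair_indep b.linearIndependent (fun h' => hv h'.symm) (a := 1)
        (by rw [one_smul]; exact h)).1
    have hmem : x ∈ span (ZMod p) ({b 0 + (cv / cu) • b v} : Set V) :=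
      mem_span_singleton.2 ⟨cu, by
        rw [hxe']
        rw [smul_add, smul_smul, mul_div_cancel₀ _ hcu]⟩
    obtain ⟨t, ht⟩ := mem_span_singleton.1
      ((single_mem hg0 hB hx hy0).1 hmem)
    have ht0 : t ≠ 0 := by
      rintro rfl
      rw [zero_smul] at ht
      exact gne hg0 hx ht.symm
    refine ⟨t * A1 * cu⁻¹, by simp [ht0, hA1, hcu], ?_⟩
    rw [← ht, he1, hpx']
    match_scalars <;> field_simp <;> ring
  by_cases hi0 : i = 0
  · exact key i j (b.repr x i) (b.repr x j) hi0
      (fun h => hij (hi0.trans h.symm)) hci hcj hxe hpx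
  by_cases hj0 : j = 0
  · exact key j i (b.repr x j) (b.repr x i) hj0 hi0 hcj hci
      (hxe.trans (add_comm _ _)) (hpx.trans (add_comm _ _))
  · obtain ⟨A, hA, he⟩ := ddagger hg0 hB b hi0 hj0 hij hci hcj
    rw [tau_id hg0 hB b hi0 hci, tau_id hg0 hB b hj0 hcj] at he
    refine ⟨A, hA, ?_⟩
    conv_lhs => rw [hxe]
    rw [he, hpx]

include hg0 hB in
theorem master [DecidableEq ℕ] {x : V} (hx : x ≠ 0) :
    ∃ A : ZMod p, A ≠ 0 ∧ g x = A • psi hg0 hB b x := by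
  suffices h : ∀ (n : ℕ) (x : V), x ≠ 0 → (b.repr x).support.card = n →
      ∃ A : ZMod p, A ≠ 0 ∧ g x = A • psi hg0 hB b x from
    h _ x hx rfl
  intro n
  induction n using Nat.strong_induction_on with
  | _ n IH =>
  intro x hx hcard
  -- n = 0 is impossible
  rcases Nat.eq_zero_or_pos n with h0 | h0
  · exfalso
    rw [h0, Finset.card_eq_zero, Finsupp.support_eq_empty] at hcard
    exact hx (by simpa using congrArg b.repr.symm hcard)
  by_cases h1 : n = 1
  · exact master1 hg0 hB b hx (h1 ▸ hcard)
  by_cases h2 : n = 2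
  · exact master2 hg0 hB b hx (h2 ▸ hcard)
  have h3 : 3 ≤ n := by omega
  -- pick two distinct support elements
  obtain ⟨j, hjs, k, hks, hjk⟩ := Finset.one_lt_card.1 (by omega :
    1 < (b.repr x).support.card)
  have hcj : b.repr x j ≠ 0 := Finsupp.mem_support_iff.1 hjs
  have hck : b.repr x k ≠ 0 := Finsupp.mem_support_iff.1 hks
  set cj := b.repr x j with hcjdef
  set ck := b.repr x k with hckdef
  set u := x - ck • b k with hudef
  set v := x - cj • b j with hvdef
  set y := x - cj • b j - ck • b k with hydef
  -- coordinates of u, v, y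
  have hru : ∀ a : ℕ, b.repr u a = if a = k then 0 else b.repr x a := by
    intro a
    rw [hudef, map_sub, map_smul, b.repr_self]
    rcases eq_or_ne a k with rfl | hak
    · simp [Finsupp.single_apply, hckdef]
    · simp [Finsupp.single_apply, hak, Ne.symm hak]
  have hrv : ∀ a : ℕ, b.repr v a = if a = j then 0 else b.repr x a := by
    intro a
    rw [hvdef, map_sub, map_smul, b.repr_self]
    rcases eq_or_ne a j with rfl | haj
    · simp [Finsupp.single_apply, hcjdef]
    · simp [Finsupp.single_apply, haj, Ne.symm haj]
  have hry : ∀ a : ℕ, b.repr y a =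
      if a = j then 0 else if a = k then 0 else b.repr x a := by
    intro a
    rw [hydef, map_sub, map_sub, map_smul, map_smul, b.repr_self, b.repr_self]
    rcases eq_or_ne a j with rfl | haj
    · simp [Finsupp.single_apply, hjk, Ne.symm hjk, hcjdef]
    · rcases eq_or_ne a k with rfl | hak
      · simp [Finsupp.single_apply, hjk, Ne.symm hjk, haj, Ne.symm haj, hckdef]
      · simp [Finsupp.single_apply, haj, Ne.symm haj, hak, Ne.symm hak]
  -- nonvanishing
  have hu0 : u ≠ 0 := by
    intro h
    have : b.repr u j = 0 := by rw [h]; simp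
    rw [hru j, if_neg hjk] at this
    exact hcj this
  have hv0 : v ≠ 0 := by
    intro h
    have : b.repr v k = 0 := by rw [h]; simp
    rw [hrv k, if_neg (Ne.symm hjk)] at this
    exact hck this
  -- a third support element
  obtain ⟨i, his⟩ := Finset.card_pos.1 (by
    rw [Finset.card_erase_of_mem (Finset.mem_erase.2 ⟨Ne.symm hjk, hks⟩),
      Finset.card_erase_of_mem hjs, hcard]
    omega : 0 < (((b.repr x).support.erase j).erase k).card)
  obtain ⟨hik, hitmp⟩ := Finset.mem_erase.1 his
  obtain ⟨hij, hisup⟩ := Finset.mem_erase.1 hitmp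
  have hy0 : y ≠ 0 := by
    intro h
    have : b.repr y i = 0 := by rw [h]; simp
    rw [hry i, if_neg hij, if_neg hik] at this
    exact Finsupp.mem_support_iff.1 hisup this
  -- support inclusions and cardinalities
  have hsu : (b.repr u).support ⊆ (b.repr x).support.erase k := by
    intro a ha
    have := Finsupp.mem_support_iff.1 ha
    rw [hru a] at this
    rcases eq_or_ne a k with rfl | hak
    · simp at this
    · rw [if_neg hak] at this
      exact Finset.mem_erase.2 ⟨hak, Finsupp.mem_support_iff.2 this⟩
  have hsv : (b.repr v).support ⊆ (b.repr x).support.erase j := by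
    intro a ha
    have := Finsupp.mem_support_iff.1 ha
    rw [hrv a] at this
    rcases eq_or_ne a j with rfl | haj
    · simp at this
    · rw [if_neg haj] at this
      exact Finset.mem_erase.2 ⟨haj, Finsupp.mem_support_iff.2 this⟩
  have hsy : ((b.repr y).support : Set ℕ) ⊆
      (((b.repr x).support.erase j).erase k : Finset ℕ) := by
    intro a ha
    have := Finsupp.mem_support_iff.1 (by exact_mod_cast ha)
    rw [hry a] at this
    rcases eq_or_ne a j with rfl | haj
    · simp at this
    · rcases eq_or_ne a k with rfl | hak
      · rw [if_neg haj] at this; simp at this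
      · rw [if_neg haj, if_neg hak] at this
        exact_mod_cast Finset.mem_erase.2 ⟨hak,
          Finset.mem_erase.2 ⟨haj, Finsupp.mem_support_iff.2 this⟩⟩
  have hcu : (b.repr u).support.card < n := by
    have := Finset.card_le_card hsu
    rw [Finset.card_erase_of_mem hks, hcard] at this
    omega
  have hcv : (b.repr v).support.card < n := by
    have := Finset.card_le_card hsv
    rw [Finset.card_erase_of_mem hjs, hcard] at this
    omega
  -- induction hypothesis on u and v
  obtain ⟨Au, hAu, heu⟩ := IH _ hcu u hu0 rfl
  obtain ⟨Av, hAv, hev⟩ := IH _ hcv v hv0 rfl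
  obtain ⟨γk, hγk, hγke⟩ := gb_fvec hg0 hB b k
  obtain ⟨γj, hγj, hγje⟩ := gb_fvec hg0 hB b j
  -- expressions of g x
  have hm1 : x ∈ span (ZMod p) ({u, b k} : Set V) :=
    mem_span_pair.2 ⟨1, ck, by rw [hudef]; module⟩
  have hm2 : x ∈ span (ZMod p) ({v, b j} : Set V) :=
    mem_span_pair.2 ⟨1, cj, by rw [hvdef]; module⟩
  obtain ⟨A, B, e1⟩ := gspan hg0 hB hx hu0 (b.ne_zero k) hm1 heu hγke
  obtain ⟨A', B', e2⟩ := gspan hg0 hB hx hv0 (b.ne_zero j) hm2 hev hγje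
  -- rewrite psi u, psi v in terms of psi y
  have huy : psi hg0 hB b u = psi hg0 hB b y + cj • fvec hg0 hB b j := by
    have h : u = y + cj • b j := by rw [hudef, hydef]; module
    rw [h, map_add, map_smul, psi_basis]
  have hvy : psi hg0 hB b v = psi hg0 hB b y + ck • fvec hg0 hB b k := by
    have h : v = y + ck • b k := by rw [hvdef, hydef]; module
    rw [h, map_add, map_smul, psi_basis]
  rw [huy] at e1
  rw [hvy] at e2
  -- compare coefficients
  have e3 : (A - A') • psi hg0 hB b y + (A * cj - B') • fvec hg0 hB b j +
      (B - A' * ck) • fvec hg0 hB b k = 0 := by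
    linear_combination (norm := module) e2 - e1
  have hpy : psi hg0 hB b y ∈ span (ZMod p)
      (fvec hg0 hB b '' ((((b.repr x).support.erase j).erase k : Finset ℕ) : Set ℕ)) :=
    span_mono (Set.image_mono hsy) (psi_mem_span_support hg0 hB b y)
  have hpy0 : psi hg0 hB b y ≠ 0 := by
    intro h
    exact hy0 (psi_injective hg0 hB b (by rw [h, map_zero]))
  have hjT : j ∉ ((((b.repr x).support.erase j).erase k : Finset ℕ) : Set ℕ) := by
    intro h
    have := Finset.mem_erase.1 (by exact_mod_cast h)
    exact (Finset.mem_erase.1 this.2).1 rfl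
  have hkT : k ∉ ((((b.repr x).support.erase j).erase k : Finset ℕ) : Set ℕ) := by
    intro h
    exact (Finset.mem_erase.1 (by exact_mod_cast h)).1 rfl
  obtain ⟨q1, q2, q3⟩ := span_triple_indep (fvec_indep hg0 hB b) hpy hpy0 hjT hkT hjk e3
  have hAA' : A = A' := by linear_combination q1
  have hA0 : A ≠ 0 := by
    rintro rfl
    have hBv : B = 0 := by rw [← hAA'] at q3; simpa using q3
    refine gne hg0 hx ?_
    rw [e1, hBv]
    simp
  have hBv : B = A * ck := by rw [← hAA'] at q3; linear_combination q3
  refine ⟨A, hA0, ?_⟩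
  have hpx : psi hg0 hB b x =
      psi hg0 hB b y + cj • fvec hg0 hB b j + ck • fvec hg0 hB b k := by
    have h : x = y + cj • b j + ck • b k := by rw [hydef]; module
    conv_lhs => rw [h]
    rw [map_add, map_add, map_smul, map_smul, psi_basis, psi_basis]
  rw [e1, hBv, hpx]
  module

include hg0 hB in
theorem psi_surjective [DecidableEq ℕ] : Function.Surjective (psi hg0 hB b) := by
  intro z
  rcases eq_or_ne z 0 with rfl | hz
  · exact ⟨0, map_zero _⟩
  · have hgx : g (g.symm z) = z := g.apply_symm_apply z
    have hx : g.symm z ≠ 0 := by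
      intro h; rw [h, hg0] at hgx; exact hz hgx.symm
    obtain ⟨A, hA, he⟩ := master hg0 hB b hx
    exact ⟨A • g.symm z, by rw [map_smul, ← he, hgx]⟩

end Main

/-- If `G` preserves the relation of spanning the same line and preserves
projective lines, then `G = G* Aut(V)`: every `g ∈ G` factors as an element of
`G` fixing all one-dimensional subspaces setwise composed with a linear
automorphism. -/
theorem stmt_15 (p : ℕ) [Fact p.Prime] (hp : p ≠ 2)
    (V : Type*) [AddCommGroup V] [Module (ZMod p) V] [Countable V] [Infinite V]
    (G : Subgroup (Equiv.Perm V))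
    (hclosed : ∀ f : Equiv.Perm V, (∀ F : Finset V, ∃ g ∈ G, ∀ x ∈ F, g x = f x) → f ∈ G)
    (hAut : ∀ φ : V ≃ₗ[ZMod p] V, (φ.toEquiv : Equiv.Perm V) ∈ G)
    (hzero : ∀ g ∈ G, g 0 = (0 : V))
    (h1 : ∀ g ∈ G, ∀ v w : V, v ≠ 0 → w ≠ 0 →
      Submodule.span (ZMod p) {v} = Submodule.span (ZMod p) {w} →
      Submodule.span (ZMod p) {g v} = Submodule.span (ZMod p) {g w})
    (h2 : ∀ g ∈ G, ∀ u v w : V, u ≠ 0 → v ≠ 0 → w ≠ 0 →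
      (u ∈ Submodule.span (ZMod p) ({v, w} : Set V) ↔
        g u ∈ Submodule.span (ZMod p) ({g v, g w} : Set V))) :
    ∀ g ∈ G, ∃ h ∈ G, ∃ φ : V ≃ₗ[ZMod p] V,
      (∀ v : V, Submodule.span (ZMod p) {h v} = Submodule.span (ZMod p) {v}) ∧
      ∀ x : V, g x = h (φ x) := by
  classical
  intro g hg
  -- a countable basis
  have hinf : Infinite ↥(Module.Basis.ofVectorSpaceIndex (ZMod p) V) := by
    by_contra hfin
    rw [not_infinite_iff_finite] at hfin
    have hmf : Module.Finite (ZMod p) V :=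
      Module.Finite.of_basis (Module.Basis.ofVectorSpace (ZMod p) V)
    have : Finite V := Module.finite_of_finite (ZMod p)
    exact not_finite V
  obtain ⟨d⟩ := nonempty_denumerable ↥(Module.Basis.ofVectorSpaceIndex (ZMod p) V)
  have b : Module.Basis ℕ (ZMod p) V :=
    (Module.Basis.ofVectorSpace (ZMod p) V).reindex (@Denumerable.eqv _ d)
  have hg0 : g 0 = 0 := hzero g hg
  have hB : ∀ u v w : V, u ≠ 0 → v ≠ 0 → w ≠ 0 →
      (u ∈ span (ZMod p) ({v, w} : Set V) ↔
        g u ∈ span (ZMod p) ({g v, g w} : Set V)) :=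
    fun u v w hu hv hw => h2 g hg u v w hu hv hw
  let φ : V ≃ₗ[ZMod p] V :=
    LinearEquiv.ofBijective (psi hg0 hB b)
      ⟨psi_injective hg0 hB b, psi_surjective hg0 hB b⟩
  refine ⟨g * (φ.symm.toEquiv : Equiv.Perm V), G.mul_mem hg (hAut φ.symm), φ, ?_, ?_⟩
  · intro v
    rcases eq_or_ne v 0 with rfl | hv
    · have : (g * (φ.symm.toEquiv : Equiv.Perm V)) (0 : V) = 0 := by
        rw [Equiv.Perm.mul_apply]
        have h0 : (φ.symm.toEquiv : Equiv.Perm V) (0 : V) = 0 := map_zero φ.symm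
        rw [h0, hg0]
      rw [this]
    · have hu : φ.symm v ≠ 0 := by
        intro h
        have := congrArg φ h
        rw [φ.apply_symm_apply, map_zero] at this
        exact hv this
      obtain ⟨A, hA, he⟩ := master hg0 hB b hu
      have hval : (g * (φ.symm.toEquiv : Equiv.Perm V)) v = A • v := by
        rw [Equiv.Perm.mul_apply]
        have h1' : (φ.symm.toEquiv : Equiv.Perm V) v = φ.symm v := rfl
        rw [h1', he]
        congr 1
        have : psi hg0 hB b (φ.symm v) = φ (φ.symm v) := rfl
        rw [this, φ.apply_symm_apply]
      rw [hval]
      exact span_singleton_smul_eq (isUnit_iff_ne_zero.2 hA) v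
  · intro x
    rw [Equiv.Perm.mul_apply]
    have h1' : (φ.symm.toEquiv : Equiv.Perm V) (φ x) = φ.symm (φ x) := rfl
    rw [h1', φ.symm_apply_apply]
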